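/- If in the Gale-Shapley deferred acceptance algorithm all items share the same strict preference order over agents, say agent 1 > agent 2 > ... > agent n, then the resulting stable matching is identical to the output of Serial Dictatorship in which agents choose in the order 1, 2, ..., n, each taking its most preferred item not already taken. -/

import Mathlib

/-- `f` is the matching produced by Serial Dictatorship on the strict preference
profile given by ranks `r` (lower rank = more preferred), with agents choosing in
the order `0, 1, …, n-1`: each agent takes its most preferred item not already
taken by an earlier agent. -/
def IsSD {n : ℕ} (r : Fin n → Fin n → ℕ) (f : Fin n → Fin n) : Prop :=
  Function.Bijective f ∧
    ∀ i o : Fin n, (∀ j : Fin n, j < i → f j ≠ o) → r i (f i) ≤ r i o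


/-- State of the agent-proposing Gale-Shapley (deferred acceptance) algorithm:
the list of agents still to propose, for each agent the set of items that have
rejected it, and for each item the agent it currently (tentatively) holds. -/
structure GSState (n : ℕ) where
  queue : List (Fin n)
  rejected : Fin n → Finset (Fin n)
  holder : Fin n → Option (Fin n)

/-- The most preferred element of `S` according to the rank function `ra`
(lower rank = more preferred). -/
def bestIn {n : ℕ} (ra : Fin n → ℕ) (S : Finset (Fin n)) : Option (Fin n) :=
  (List.finRange n).find? fun o => decide (o ∈ S ∧ ∀ o' ∈ S, ra o ≤ ra o')

/-- One step of agent-proposing deferred acceptance: the next unmatched agent `a`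
proposes to its most preferred item `o` among those that have not rejected it; the
item accepts if unmatched, or if it strictly prefers `a` to its current holder `b`
(in which case `b` is rejected and will propose again); otherwise `a` is rejected. -/
def gsStep {n : ℕ} (rA rI : Fin n → Fin n → ℕ) (s : GSState n) : GSState n :=
  match s.queue with
  | [] => s
  | a :: rest =>
      match bestIn (rA a) (Finset.univ \ s.rejected a) with
      | none => { s with queue := rest }
      | some o =>
          match s.holder o with
          | none => { s with queue := rest,
                             holder := Function.update s.holder o (some a) }
          | some b =>
              if rI o a < rI o b then
                { queue := rest ++ [b],
                  rejected := Function.update s.rejected b (insert o (s.rejected b)),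
                  holder := Function.update s.holder o (some a) }
              else
                { s with queue := rest ++ [a],
                         rejected := Function.update s.rejected a
                            (insert o (s.rejected a)) }

/-- The final state of the Gale-Shapley algorithm on agent ranks `rA` and item ranks
`rI` (enough steps are taken for the algorithm to terminate). -/
def gsRun {n : ℕ} (rA rI : Fin n → Fin n → ℕ) : GSState n :=
  (gsStep rA rI)^[n * n + n]
    { queue := List.finRange n, rejected := fun _ => ∅, holder := fun _ => none }


open Finset

variable {n : ℕ}

lemma bestIn_some {ra : Fin n → ℕ} {S : Finset (Fin n)} {o : Fin n}
    (h : bestIn ra S = some o) : o ∈ S ∧ ∀ o' ∈ S, ra o ≤ ra o' := by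
  have := List.find?_some h
  simpa using this

lemma bestIn_none {ra : Fin n → ℕ} {S : Finset (Fin n)}
    (h : bestIn ra S = none) : S = ∅ := by
  by_contra hS
  obtain ⟨o, ho, hmin⟩ := S.exists_min_image ra (Finset.nonempty_iff_ne_empty.2 hS)
  have := List.find?_eq_none.1 h o (List.mem_finRange o)
  simp at this
  obtain ⟨x, hx, hlt⟩ := this ho
  exact absurd (hmin x hx) (not_le.2 hlt)

/-- The invariant preserved by the Gale-Shapley steps. -/
def GSInv (rA : Fin n → Fin n → ℕ) (s : GSState n) : Prop :=
  s.queue.Nodup ∧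
  (∀ a : Fin n, a ∈ s.queue ↔ ∀ o : Fin n, s.holder o ≠ some a) ∧
  (∀ o b : Fin n, s.holder o = some b →
      o ∉ s.rejected b ∧ ∀ o' : Fin n, o' ∉ s.rejected b → rA b o ≤ rA b o') ∧
  (∀ x o : Fin n, o ∈ s.rejected x → ∃ b : Fin n, b < x ∧ s.holder o = some b)

lemma holder_unique {rA : Fin n → Fin n → ℕ} (hA : ∀ a, Function.Injective (rA a))
    {s : GSState n} (hs : GSInv rA s) {o o' b : Fin n}
    (h1 : s.holder o = some b) (h2 : s.holder o' = some b) : o = o' := by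
  obtain ⟨h1r, h1b⟩ := hs.2.2.1 o b h1
  obtain ⟨h2r, h2b⟩ := hs.2.2.1 o' b h2
  exact hA b (le_antisymm (h1b o' h2r) (h2b o h1r))

/-- Termination measure. -/
def Phi (s : GSState n) : ℕ :=
  s.queue.length + (n * n - ∑ x : Fin n, (s.rejected x).card)

lemma sum_rejected_le (s : GSState n) : ∑ x : Fin n, (s.rejected x).card ≤ n * n := by
  calc ∑ x : Fin n, (s.rejected x).card ≤ ∑ _x : Fin n, n := by
        refine Finset.sum_le_sum fun x _ => ?_
        simpa using Finset.card_le_card (Finset.subset_univ (s.rejected x))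
    _ = n * n := by simp [mul_comm]

variable {rA rI : Fin n → Fin n → ℕ} {s : GSState n} {a o b : Fin n} {rest : List (Fin n)}

lemma gsStep_none (hq : s.queue = a :: rest)
    (hb : bestIn (rA a) (Finset.univ \ s.rejected a) = none) :
    gsStep rA rI s = { s with queue := rest } := by
  simp only [gsStep, hq, hb]

lemma gsStep_free (hq : s.queue = a :: rest)
    (hb : bestIn (rA a) (Finset.univ \ s.rejected a) = some o)
    (hh : s.holder o = none) :
    gsStep rA rI s = { s with queue := rest, holder := Function.update s.holder o (some a) } := by
  simp only [gsStep, hq, hb, hh]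

lemma gsStep_swap (hq : s.queue = a :: rest)
    (hb : bestIn (rA a) (Finset.univ \ s.rejected a) = some o)
    (hh : s.holder o = some b) (hab : rI o a < rI o b) :
    gsStep rA rI s = { queue := rest ++ [b], rejected := Function.update s.rejected b (insert o (s.rejected b)), holder := Function.update s.holder o (some a) } := by
  simp only [gsStep, hq, hb, hh, if_pos hab]

lemma gsStep_rej (hq : s.queue = a :: rest)
    (hb : bestIn (rA a) (Finset.univ \ s.rejected a) = some o)
    (hh : s.holder o = some b) (hab : ¬ rI o a < rI o b) :
    gsStep rA rI s = { s with queue := rest ++ [a], rejected := Function.update s.rejected a (insert o (s.rejected a)) } := by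
  simp only [gsStep, hq, hb, hh, if_neg hab]

lemma gsStep_nil (hq : s.queue = []) : gsStep rA rI s = s := by
  simp only [gsStep, hq]

lemma none_absurd (hA : ∀ a, Function.Injective (rA a)) (hs : GSInv rA s) (haq : a ∈ s.queue)
    (hb : bestIn (rA a) (Finset.univ \ s.rejected a) = none) : False := by
  obtain ⟨hnd, hqiff, hbest, hrej⟩ := id hs
  have hrua : s.rejected a = Finset.univ :=
    le_antisymm (Finset.subset_univ _) (Finset.sdiff_eq_empty_iff_subset.1 (bestIn_none hb))
  have hall : ∀ o : Fin n, ∃ b : Fin n, b < a ∧ s.holder o = some b := fun o =>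
    hrej a o (by rw [hrua]; exact Finset.mem_univ o)
  choose g hg hhg using hall
  have hinj : Function.Injective (fun o => (⟨(g o : ℕ), hg o⟩ : Fin (a : ℕ))) := by
    intro o o' he
    have hv := congrArg Fin.val he
    simp only [Fin.val] at hv
    have : g o = g o' := Fin.ext hv
    exact holder_unique hA hs (hhg o) (this ▸ hhg o')
  have := Fintype.card_le_of_injective _ hinj
  simp [Fintype.card_fin] at this
  omega

lemma sum_update_insert (s : GSState n) {c o : Fin n} (h : o ∉ s.rejected c) :
    ∑ x : Fin n, ((Function.update s.rejected c (insert o (s.rejected c))) x).card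
      = ∑ x : Fin n, (s.rejected x).card + 1 := by
  have key : ∀ x : Fin n, ((Function.update s.rejected c (insert o (s.rejected c))) x).card
      = Function.update (fun y => (s.rejected y).card) c ((s.rejected c).card + 1) x := by
    intro x
    by_cases hx : x = c
    · subst hx; simp [Finset.card_insert_of_notMem h]
    · simp [Function.update_of_ne hx]
  rw [Finset.sum_congr rfl fun x _ => key x,
    Finset.sum_update_of_mem (Finset.mem_univ c)]
  have := Finset.add_sum_erase Finset.univ (fun y => (s.rejected y).card) (Finset.mem_univ c)
  rw [← Finset.sdiff_singleton_eq_erase c Finset.univ] at this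
  beta_reduce at this
  omega

lemma sum_card_le (r : Fin n → Finset (Fin n)) : ∑ x : Fin n, (r x).card ≤ n * n := by
  calc ∑ x : Fin n, (r x).card ≤ ∑ _x : Fin n, n := by
        refine Finset.sum_le_sum fun x _ => ?_
        simpa using Finset.card_le_card (Finset.subset_univ (r x))
    _ = n * n := by simp [mul_comm]

lemma step_preserve (hA : ∀ a, Function.Injective (rA a)) (hs : GSInv rA s)
    (hq : s.queue = a :: rest) :
    GSInv rA (gsStep rA (fun _ x => (x : ℕ)) s) ∧
      Phi (gsStep rA (fun _ x => (x : ℕ)) s) < Phi s := by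
  obtain ⟨hnd, hqiff, hbest, hrej⟩ := id hs
  have hndr : rest.Nodup := (List.nodup_cons.1 (hq ▸ hnd)).2
  have hanr : a ∉ rest := (List.nodup_cons.1 (hq ▸ hnd)).1
  have haq : a ∈ s.queue := hq ▸ List.mem_cons_self (a := a) (l := rest)
  have hmemq : ∀ x ∈ rest, x ∈ s.queue := fun x hx => hq ▸ List.mem_cons_of_mem a hx
  rcases hb : bestIn (rA a) (Finset.univ \ s.rejected a) with _ | o
  · exact absurd hb (fun h => none_absurd hA hs haq h)
  · obtain ⟨hoS, homin⟩ := bestIn_some hb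
    have honr : o ∉ s.rejected a := (Finset.mem_sdiff.1 hoS).2
    have homin' : ∀ o', o' ∉ s.rejected a → rA a o ≤ rA a o' := fun o' h =>
      homin o' (Finset.mem_sdiff.2 ⟨Finset.mem_univ _, h⟩)
    rcases hh : s.holder o with _ | b
    · -- item o is free: a takes it
      rw [gsStep_free hq hb hh]
      constructor
      · refine ⟨hndr, ?_, ?_, ?_⟩ <;> dsimp only
        · intro x
          constructor
          · intro hx o' hx'
            rcases eq_or_ne o' o with rfl | ho'
            · rw [Function.update_self] at hx'
              exact hanr (Option.some.inj hx' ▸ hx)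
            · rw [Function.update_of_ne ho'] at hx'
              exact (hqiff x).1 (hmemq x hx) o' hx'
          · intro hall
            by_contra hx
            rcases eq_or_ne x a with rfl | hxa
            · exact hall o (Function.update_self _ _ _)
            · have hxq : x ∉ s.queue := by
                rw [hq]; simp [hxa, hx]
              have := (not_iff_not.2 (hqiff x)).1 hxq
              push_neg at this
              obtain ⟨o', ho'⟩ := this
              have hne : o' ≠ o := fun e => by rw [e, hh] at ho'; cases ho'
              exact hall o' (by rw [Function.update_of_ne hne]; exact ho')
        · intro o'' c hc
          rcases eq_or_ne o'' o with rfl | ho''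
          · rw [Function.update_self] at hc
            cases Option.some.inj hc
            exact ⟨honr, homin'⟩
          · rw [Function.update_of_ne ho''] at hc
            exact hbest o'' c hc
        · intro x o'' ho''
          obtain ⟨c, hc, hch⟩ := hrej x o'' ho''
          have hne : o'' ≠ o := fun e => by rw [e, hh] at hch; cases hch
          exact ⟨c, hc, by rw [Function.update_of_ne hne]; exact hch⟩
      · simp [Phi, hq]
    · -- item o is held by b
      have hbnq : b ∉ s.queue := fun h => (hqiff b).1 h o hh
      have hba : b ≠ a := fun e => hbnq (e ▸ haq)
      have hbnr : b ∉ rest := fun h => hbnq (hmemq b h)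
      obtain ⟨hobr, hobest⟩ := hbest o b hh
      by_cases hab : ((a : ℕ) < (b : ℕ))
      · -- a displaces b
        have haltb : a < b := hab
        rw [gsStep_swap hq hb hh hab]
        have hsum := sum_update_insert s hobr
        constructor
        · refine ⟨?_, ?_, ?_, ?_⟩ <;> dsimp only
          · simp [List.nodup_append, hndr, hbnr]; exact fun x hx e => hbnr (e ▸ hx)
          · intro x
            simp only [List.mem_append, List.mem_singleton]
            constructor
            · rintro (hx | rfl) o' hx'
              · rcases eq_or_ne o' o with rfl | ho'
                · rw [Function.update_self] at hx'
                  exact hanr (Option.some.inj hx' ▸ hx)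
                · rw [Function.update_of_ne ho'] at hx'
                  exact (hqiff x).1 (hmemq x hx) o' hx'
              · rcases eq_or_ne o' o with rfl | ho'
                · rw [Function.update_self] at hx'
                  exact hba (Option.some.inj hx').symm
                · rw [Function.update_of_ne ho'] at hx'
                  exact ho' (holder_unique hA hs hx' hh)
            · intro hall
              by_contra hx
              push_neg at hx
              rcases eq_or_ne x a with rfl | hxa
              · exact hall o (Function.update_self _ _ _)
              · have hxq : x ∉ s.queue := by
                  rw [hq]; simp [hxa, hx.1]
                have := (not_iff_not.2 (hqiff x)).1 hxq
                push_neg at this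
                obtain ⟨o', ho'⟩ := this
                have hne : o' ≠ o := fun e => hx.2 (by rw [e, hh] at ho'; exact (Option.some.inj ho').symm)
                exact hall o' (by rw [Function.update_of_ne hne]; exact ho')
          · intro o'' c hc
            rcases eq_or_ne o'' o with rfl | ho''
            · rw [Function.update_self] at hc
              cases Option.some.inj hc
              rw [Function.update_of_ne hba.symm]
              exact ⟨honr, homin'⟩
            · rw [Function.update_of_ne ho''] at hc
              have hcb : c ≠ b := fun e => ho'' (holder_unique hA hs (e ▸ hc) hh)
              rw [Function.update_of_ne hcb]
              exact hbest o'' c hc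
          · intro x o'' ho''
            rcases eq_or_ne x b with rfl | hxb
            · rw [Function.update_self, Finset.mem_insert] at ho''
              rcases ho'' with rfl | ho''
              · exact ⟨a, haltb, Function.update_self _ _ _⟩
              · obtain ⟨c, hc, hch⟩ := hrej x o'' ho''
                have hne : o'' ≠ o := fun e => hobr (e ▸ ho'')
                exact ⟨c, hc, by rw [Function.update_of_ne hne]; exact hch⟩
            · rw [Function.update_of_ne hxb] at ho''
              obtain ⟨c, hc, hch⟩ := hrej x o'' ho''
              rcases eq_or_ne o'' o with rfl | hne
              · have : c = b := Option.some.inj (hch ▸ hh ▸ rfl)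
                exact ⟨a, lt_trans haltb (this ▸ hc),
                  Function.update_self _ _ _⟩
              · exact ⟨c, hc, by rw [Function.update_of_ne hne]; exact hch⟩
        · have h1 : ∑ x : Fin n, (s.rejected x).card + 1 ≤ n * n := hsum ▸ sum_card_le _
          simp only [Phi, hq, List.length_append, List.length_cons, List.length_nil, hsum]
          omega
      · -- a is rejected by o
        have hblta : b < a := by
          have : (a : ℕ) ≠ (b : ℕ) := fun e => hba (Fin.ext e.symm)
          have : (b : ℕ) < (a : ℕ) := by omega
          exact this
        rw [gsStep_rej hq hb hh hab]
        have hsum := sum_update_insert s honr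
        constructor
        · refine ⟨?_, ?_, ?_, ?_⟩ <;> dsimp only
          · simp [List.nodup_append, hndr, hanr]; exact fun x hx e => hanr (e ▸ hx)
          · intro x
            have hmem : x ∈ rest ++ [a] ↔ x ∈ s.queue := by
              rw [hq]; simp [or_comm]
            rw [hmem]
            exact hqiff x
          · intro o'' c hc
            have hca : c ≠ a := fun e => (hqiff a).1 haq o'' (e ▸ hc)
            rw [Function.update_of_ne hca]
            exact hbest o'' c hc
          · intro x o'' ho''
            rcases eq_or_ne x a with rfl | hxa
            · rw [Function.update_self, Finset.mem_insert] at ho''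
              rcases ho'' with rfl | ho''
              · exact ⟨b, hblta, hh⟩
              · exact hrej x o'' ho''
            · rw [Function.update_of_ne hxa] at ho''
              exact hrej x o'' ho''
        · have h1 : ∑ x : Fin n, (s.rejected x).card + 1 ≤ n * n := hsum ▸ sum_card_le _
          simp only [Phi, hq, List.length_append, List.length_cons, List.length_nil, hsum]
          omega

lemma iterate_nil {rI : Fin n → Fin n → ℕ} {s : GSState n} (hq : s.queue = []) (k : ℕ) :
    (gsStep rA rI)^[k] s = s :=
  Function.iterate_fixed (gsStep_nil hq) k

lemma run_term (hA : ∀ a, Function.Injective (rA a)) :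
    ∀ k : ℕ, ∀ s : GSState n, GSInv rA s → Phi s ≤ k →
      GSInv rA ((gsStep rA (fun _ x => (x : ℕ)))^[k] s) ∧
        ((gsStep rA (fun _ x => (x : ℕ)))^[k] s).queue = [] := by
  intro k
  induction k with
  | zero =>
      intro s hs hp
      have hp0 : Phi s = 0 := Nat.le_zero.1 hp
      unfold Phi at hp0
      have : s.queue.length = 0 := by omega
      exact ⟨hs, List.length_eq_zero_iff.1 this⟩
  | succ k ih =>
      intro s hs hp
      rcases hq : s.queue with _ | ⟨a, rest⟩
      · rw [iterate_nil hq]; exact ⟨hs, hq⟩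
      · obtain ⟨h1, h2⟩ := step_preserve hA hs hq
        rw [Function.iterate_succ_apply]
        exact ih _ h1 (by omega)

/-- If in the Gale-Shapley deferred acceptance algorithm all items share the same
strict preference order over agents, namely agent `0 > 1 > ⋯ > n-1` (item ranks
`fun _ a => a`), then the resulting stable matching is identical to the output of
Serial Dictatorship with agents choosing in the order `0, 1, …, n-1`. -/
theorem galeShapley_common_priority_eq_serialDictatorship {n : ℕ}
    (rA : Fin n → Fin n → ℕ) (hA : ∀ a, Function.Injective (rA a))
    (f : Fin n → Fin n) (hf : IsSD rA f) :
    ∀ a : Fin n, (gsRun rA (fun _ a => (a : ℕ))).holder (f a) = some a := by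
  have hinv0 : GSInv rA { queue := List.finRange n, rejected := fun _ => ∅, holder := fun _ => none } := by
    refine ⟨List.nodup_finRange n, ?_, ?_, ?_⟩
    · intro a
      exact iff_of_true (List.mem_finRange a) (fun o h => by cases h)
    · intro o b h; cases h
    · intro x o h; simp at h
  have hphi0 : Phi { queue := List.finRange n, rejected := fun _ => ∅, holder := (fun _ => none : Fin n → Option (Fin n)) } ≤ n * n + n := by
    simp [Phi]
    omega
  obtain ⟨hinv, hqe⟩ := run_term hA (n * n + n) _ hinv0 hphi0
  set S : GSState n := gsRun rA (fun _ a => (a : ℕ)) with hS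
  have hSd : S = (gsStep rA (fun _ x => (x : ℕ)))^[n * n + n] { queue := List.finRange n, rejected := fun _ => ∅, holder := fun _ => none } := rfl
  rw [← hSd] at hinv hqe
  obtain ⟨hnd, hqiff, hbest, hrej⟩ := id hinv
  suffices H : ∀ m : ℕ, ∀ a : Fin n, (a : ℕ) = m → S.holder (f a) = some a by
    exact fun a => H a a rfl
  intro m
  induction m using Nat.strong_induction_on with
  | _ m ih =>
    intro a ham
    have IH' : ∀ j : Fin n, j < a → S.holder (f j) = some j := fun j hj =>
      ih (j : ℕ) (ham ▸ hj) j rfl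
    have hanq : a ∉ S.queue := by rw [hqe]; simp
    have := (not_iff_not.2 (hqiff a)).1 hanq
    push_neg at this
    obtain ⟨o, ho⟩ := this
    have hsubs : ∀ o'' ∈ S.rejected a, ∃ j, j < a ∧ o'' = f j := by
      intro o'' h
      obtain ⟨c, hc, hch⟩ := hrej a o'' h
      exact ⟨c, hc, holder_unique hA hinv hch (IH' c hc)⟩
    have hfa_nr : f a ∉ S.rejected a := by
      intro h
      obtain ⟨j, hj, he⟩ := hsubs _ h
      exact absurd (hf.1.1 he).symm (ne_of_lt hj)
    have hno : ∀ j : Fin n, j < a → f j ≠ o := by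
      intro j hj e
      have h1 := IH' j hj
      rw [e, ho] at h1
      exact absurd (Option.some.inj h1).symm (ne_of_lt hj)
    have h1 : rA a (f a) ≤ rA a o := hf.2 a o hno
    have h2 : rA a o ≤ rA a (f a) := (hbest o a ho).2 (f a) hfa_nr
    have : o = f a := hA a (le_antisymm h2 h1)
    rw [← this]
    exact ho
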